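/- Assume (G,K,θ) is a multiplicity-free triple and let φ and μ be two distinct spherical functions. Then: (i) φ* = φ, i.e., conj(φ(g⁻¹)) = φ(g) for all g ∈ G; (ii) φ*μ = 0 (the convolution is identically zero); (iii) ⟨λ_G(g₁)φ, λ_G(g₂)μ⟩_{L(G)} = 0 for all g₁, g₂ ∈ G, where λ_G is the left regular representation; in particular ⟨φ, μ⟩_{L(G)} = 0. -/

import Mathlib

open scoped BigOperators ComplexConjugate Classical

set_option linter.unusedSectionVars false
set_option synthInstance.maxHeartbeats 1000000
set_option maxHeartbeats 1000000

noncomputable section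

namespace MFT

variable {G : Type} [Group G] [Fintype G]
variable {V : Type} [NormedAddCommGroup V] [InnerProductSpace ℂ V] [FiniteDimensional ℂ V]

/-- Left translation of functions on `G`: `(translate h f) g = f (h⁻¹ * g)`.
This is the left regular action of `G`. -/
def translate {A : Type} (h : G) (f : G → A) : G → A := fun g => f (h⁻¹ * g)

/-- A representation by linear automorphisms is unitary if it preserves the inner product. -/
def IsUnitaryRep {H W : Type} [Group H] [NormedAddCommGroup W] [InnerProductSpace ℂ W]
    (ρ : H →* (W ≃ₗ[ℂ] W)) : Prop :=
  ∀ (h : H) (x y : W), (inner ℂ (ρ h x) (ρ h y) : ℂ) = (inner ℂ x y : ℂ)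

/-- Irreducibility of a representation: the space is nonzero and has no proper nonzero
invariant subspace. -/
def IsIrreducibleRep {H W : Type} [Group H] [AddCommGroup W] [Module ℂ W]
    (ρ : H →* (W ≃ₗ[ℂ] W)) : Prop :=
  (⊥ : Submodule ℂ W) ≠ ⊤ ∧
    ∀ p : Submodule ℂ W, (∀ (h : H) (x : W), x ∈ p → ρ h x ∈ p) → p = ⊥ ∨ p = ⊤

variable (K : Subgroup G) (θ : ↥K →* (V ≃ₗ[ℂ] V))

/-- The space `Ind_K^G V` of the representation induced by `θ`:
functions `f : G → V` with `f (g k) = θ k⁻¹ (f g)`. -/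
def ind : Submodule ℂ (G → V) where
  carrier := {f | ∀ (g : G) (k : K), f (g * (k : G)) = θ k⁻¹ (f g)}
  add_mem' := by
    intro f₁ f₂ h₁ h₂ g k
    simp only [Pi.add_apply, h₁ g k, h₂ g k, map_add]
  zero_mem' := by intro g k; simp
  smul_mem' := by
    intro c f hf g k
    simp only [Pi.smul_apply, hf g k, map_smul]

theorem translate_mem_ind {f : G → V} (hf : f ∈ ind K θ) (h : G) : translate h f ∈ ind K θ := by
  intro g k
  simpa [translate, mul_assoc] using hf (h⁻¹ * g) k

/-- The left regular action of `G` on the induced space, `λ(h) f = f (h⁻¹ ·)`. -/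
def lamL (h : G) : ↥(ind K θ) →ₗ[ℂ] ↥(ind K θ) where
  toFun f := ⟨translate h ↑f, translate_mem_ind K θ f.2 h⟩
  map_add' f₁ f₂ := by apply Subtype.ext; funext g; simp [translate]
  map_smul' c f := by apply Subtype.ext; funext g; simp [translate]

instance : AddCommGroup (↥(ind K θ) →ₗ[ℂ] ↥(ind K θ)) := LinearMap.addCommGroup

instance : Module ℂ (↥(ind K θ) →ₗ[ℂ] ↥(ind K θ)) := LinearMap.module

/-- The Hecke algebra condition: `F (k₁ g k₂) = θ k₂⁻¹ ∘ F g ∘ θ k₁⁻¹`. -/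
def IsHecke (F : G → (V →ₗ[ℂ] V)) : Prop :=
  ∀ (g : G) (k₁ k₂ : K),
    F ((k₁ : G) * g * (k₂ : G)) = (θ k₂⁻¹).toLinearMap ∘ₗ F g ∘ₗ (θ k₁⁻¹).toLinearMap

/-- Convolution on the Hecke algebra: `(F₁ * F₂) g = ∑ h, F₁ (h⁻¹ g) ∘ F₂ h`. -/
def heckeConv (F₁ F₂ : G → (V →ₗ[ℂ] V)) : G → (V →ₗ[ℂ] V) :=
  fun g => ∑ h : G, F₁ (h⁻¹ * g) ∘ₗ F₂ h

/-- Involution on the Hecke algebra: `F* g = (F g⁻¹)*`. -/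
def heckeStar (F : G → (V →ₗ[ℂ] V)) : G → (V →ₗ[ℂ] V) :=
  fun g => LinearMap.adjoint (F g⁻¹)

/-- The inner product on the Hecke algebra:
`⟨F₁, F₂⟩ = ∑ g, (dim V)⁻¹ tr (F₂(g)* ∘ F₁(g))`. -/
def heckeInner (F₁ F₂ : G → (V →ₗ[ℂ] V)) : ℂ :=
  ∑ g : G, (Module.finrank ℂ V : ℂ)⁻¹ *
    LinearMap.trace ℂ V (LinearMap.adjoint (F₂ g) ∘ₗ F₁ g)

/-- `(ξ F) f g = ∑ h, F (h⁻¹ g) (f h)`. -/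
def xiFun (F : G → (V →ₗ[ℂ] V)) (f : G → V) : G → V := fun g => ∑ h : G, F (h⁻¹ * g) (f h)

/-- `ξ F` as a linear endomorphism of `G → V`. -/
def xiL (F : G → (V →ₗ[ℂ] V)) : (G → V) →ₗ[ℂ] (G → V) where
  toFun := xiFun F
  map_add' f₁ f₂ := by funext g; simp [xiFun, Finset.sum_add_distrib]
  map_smul' c f := by funext g; simp [xiFun, Finset.smul_sum]

/-- The paper's inner product on the induced space:
`⟨f₁, f₂⟩ = |K|⁻¹ ∑ g, ⟨f₁ g, f₂ g⟩_V` (conjugate-linear in the second variable). -/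
def innerInd (f₁ f₂ : G → V) : ℂ := (Nat.card K : ℂ)⁻¹ * ∑ g : G, (inner ℂ (f₂ g) (f₁ g) : ℂ)

/-- Convolution of complex valued functions on `G`. -/
def convC (f₁ f₂ : G → ℂ) : G → ℂ := fun g => ∑ h : G, f₁ h * f₂ (h⁻¹ * g)

/-- The involution `f* g = conj (f g⁻¹)` on `L(G)`. -/
def starC (f : G → ℂ) : G → ℂ := fun g => conj (f g⁻¹)

/-- The paper's inner product on `L(G)`: `⟨f₁, f₂⟩ = ∑ g, f₁ g • conj (f₂ g)`. -/
def innerC (f₁ f₂ : G → ℂ) : ℂ := ∑ g : G, f₁ g * conj (f₂ g)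

/-- The function `ψ (k) = (d_θ/|K|) ⟨v, θ k v⟩` on `K`, extended by `0` on `G \ K`. -/
def psi (v : V) : G → ℂ := fun g =>
  if h : g ∈ K then ((Module.finrank ℂ V : ℂ) / (Nat.card K : ℂ)) * (inner ℂ (θ ⟨g, h⟩ v) v : ℂ)
  else 0

/-- `(T_v f) g = √(d_θ/|K|) ⟨f g, v⟩`. -/
def Tv (v : V) (f : G → V) : G → ℂ := fun g =>
  (Real.sqrt ((Module.finrank ℂ V : ℝ) / (Nat.card K : ℝ)) : ℂ) * (inner ℂ v (f g) : ℂ)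

/-- The Hecke algebra `H(G,K,ψ) = {f : f = ψ * f * ψ}` as a set. -/
def HSet (v : V) : Set (G → ℂ) := {f | convC (convC (psi K θ v) f) (psi K θ v) = f}

/-- `(S_v F) g = d_θ ⟨F g v, v⟩`. -/
def Sv (v : V) (F : G → (V →ₗ[ℂ] V)) : G → ℂ :=
  fun g => (Module.finrank ℂ V : ℂ) * (inner ℂ v (F g v) : ℂ)

/-- A spherical function: an element of `H(G,K,ψ)` taking value `1` at the identity which
is an eigenvector of all convolution operators coming from `H(G,K,ψ)`. -/
def IsSpherical (v : V) (φ : G → ℂ) : Prop :=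
  φ ∈ HSet K θ v ∧ φ 1 = 1 ∧ ∀ f ∈ HSet K θ v, ∃ c : ℂ, convC φ f = c • φ

/-- The intertwining space `Hom_{K_s}(Res^K_{K_s} θ, θ^s)` where `K_s = K ∩ s K s⁻¹`
and `θ^s (x) = θ (s⁻¹ x s)`. -/
def interSpace (s : G) : Submodule ℂ (V →ₗ[ℂ] V) where
  carrier := {T | ∀ (x : G) (hx : x ∈ K) (hx' : s⁻¹ * x * s ∈ K),
      T ∘ₗ (θ ⟨x, hx⟩).toLinearMap = (θ ⟨s⁻¹ * x * s, hx'⟩).toLinearMap ∘ₗ T}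
  add_mem' := by
    intro a b ha hb x hx hx'
    simp only [LinearMap.add_comp, LinearMap.comp_add, ha x hx hx', hb x hx hx']
  zero_mem' := by
    intro x hx hx'
    simp
  smul_mem' := by
    intro c a ha x hx hx'
    simp only [LinearMap.smul_comp, LinearMap.comp_smul, ha x hx hx']

/-- `S` is a complete set of representatives of the double cosets `K\G/K`. -/
def IsDoubleCosetReps (S : Finset G) : Prop :=
  ∀ g : G, ∃! s : G, s ∈ S ∧ ∃ k₁ k₂ : K, g = (k₁ : G) * s * (k₂ : G)

/-- The commutant `End_G(Ind_K^G V)`. -/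
def commutant : Submodule ℂ (↥(ind K θ) →ₗ[ℂ] ↥(ind K θ)) where
  carrier := {T | ∀ (h : G) (f : ↥(ind K θ)), T (lamL K θ h f) = lamL K θ h (T f)}
  add_mem' := by
    intro a b ha hb h f
    simp [ha h f, hb h f]
  zero_mem' := by intro h f; simp
  smul_mem' := by
    intro c a ha h f
    simp [ha h f]

/-- The space `Hom_G(W, Ind_K^G V)` of `G`-equivariant linear maps from `(σ, W)` to the
induced representation. -/
def homGInd {W : Type} [AddCommGroup W] [Module ℂ W] (σ : G →* (W ≃ₗ[ℂ] W)) :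
    Submodule ℂ (W →ₗ[ℂ] (G → V)) where
  carrier := {A | (∀ w : W, A w ∈ ind K θ) ∧ ∀ (g : G) (w : W), A (σ g w) = translate g (A w)}
  add_mem' := by
    rintro A B ⟨hA₁, hA₂⟩ ⟨hB₁, hB₂⟩
    refine ⟨fun w => (ind K θ).add_mem (hA₁ w) (hB₁ w), fun g w => ?_⟩
    funext x
    simp [translate, hA₂ g w, hB₂ g w, Pi.add_apply]
  zero_mem' := by
    refine ⟨fun w => (ind K θ).zero_mem, fun g w => ?_⟩
    funext x
    simp [translate]
  smul_mem' := by
    rintro c A ⟨hA₁, hA₂⟩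
    refine ⟨fun w => (ind K θ).smul_mem c (hA₁ w), fun g w => ?_⟩
    funext x
    simp [translate, hA₂ g w]

/-- `Ind_K^G θ` is multiplicity-free: every irreducible representation of `G` occurs with
multiplicity at most `1`. -/
def IsMultFree : Prop :=
  ∀ (W : Type) [AddCommGroup W] [Module ℂ W] [FiniteDimensional ℂ W]
    (σ : G →* (W ≃ₗ[ℂ] W)), IsIrreducibleRep σ → Module.finrank ℂ ↥(homGInd K θ σ) ≤ 1

theorem convC_add_left (f₁ f₂ g : G → ℂ) : convC (f₁ + f₂) g = convC f₁ g + convC f₂ g := by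
  funext x
  simp [convC, add_mul, Finset.sum_add_distrib]

theorem convC_add_right (f g₁ g₂ : G → ℂ) : convC f (g₁ + g₂) = convC f g₁ + convC f g₂ := by
  funext x
  simp [convC, mul_add, Finset.sum_add_distrib]

theorem convC_smul_left (c : ℂ) (f g : G → ℂ) : convC (c • f) g = c • convC f g := by
  funext x
  simp [convC, Finset.mul_sum, mul_assoc]

theorem convC_smul_right (c : ℂ) (f g : G → ℂ) : convC f (c • g) = c • convC f g := by
  funext x
  simp [convC, Finset.mul_sum, mul_left_comm]

theorem convC_zero_left (g : G → ℂ) : convC 0 g = 0 := by funext x; simp [convC]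

theorem convC_zero_right (f : G → ℂ) : convC f 0 = 0 := by funext x; simp [convC]

/-- The Hecke algebra `H(G,K,ψ)` as a subspace of `L(G)`. -/
def heckeSub (v : V) : Submodule ℂ (G → ℂ) where
  carrier := HSet K θ v
  add_mem' := by
    intro a b ha hb
    have ha' : convC (convC (psi K θ v) a) (psi K θ v) = a := ha
    have hb' : convC (convC (psi K θ v) b) (psi K θ v) = b := hb
    show convC (convC (psi K θ v) (a + b)) (psi K θ v) = a + b
    rw [convC_add_right, convC_add_left, ha', hb']
  zero_mem' := by
    show convC (convC (psi K θ v) 0) (psi K θ v) = 0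
    rw [convC_zero_right, convC_zero_left]
  smul_mem' := by
    intro c a ha
    have ha' : convC (convC (psi K θ v) a) (psi K θ v) = a := ha
    show convC (convC (psi K θ v) (c • a)) (psi K θ v) = c • a
    rw [convC_smul_right, convC_smul_left, ha']

/-- The subspace `I(G,K,ψ) = {f ∈ L(G) : f * ψ = f}`. -/
def ISub (v : V) : Submodule ℂ (G → ℂ) where
  carrier := {φ | convC φ (psi K θ v) = φ}
  add_mem' := by
    intro a b ha hb
    have ha' : convC a (psi K θ v) = a := ha
    have hb' : convC b (psi K θ v) = b := hb
    show convC (a + b) (psi K θ v) = a + b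
    rw [convC_add_left, ha', hb']
  zero_mem' := by
    show convC 0 (psi K θ v) = 0
    rw [convC_zero_left]
  smul_mem' := by
    intro c a ha
    have ha' : convC a (psi K θ v) = a := ha
    show convC (c • a) (psi K θ v) = c • a
    rw [convC_smul_left, ha']

/-- The subspace of `L(G)` spanned by the left translates of `φ`. -/
def sphSpan (φ : G → ℂ) : Submodule ℂ (G → ℂ) :=
  Submodule.span ℂ (Set.range fun g : G => translate g φ)

/-- A submodule of functions on `G` invariant under all left translations. -/
def IsInvariantSub {A : Type} [AddCommGroup A] [Module ℂ A] (p : Submodule ℂ (G → A)) : Prop :=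
  ∀ h : G, ∀ f ∈ p, translate h f ∈ p

/-- `p` is an irreducible `G`-invariant subspace of the induced representation. -/
def IsIrredSubOfInd (p : Submodule ℂ (G → V)) : Prop :=
  p ≤ ind K θ ∧ IsInvariantSub p ∧ p ≠ ⊥ ∧
    ∀ q : Submodule ℂ (G → V), q ≤ p → IsInvariantSub q → q = ⊥ ∨ q = p

theorem convC_assoc (a b c : G → ℂ) : convC (convC a b) c = convC a (convC b c) := by
  funext g
  simp only [convC, Finset.sum_mul, Finset.mul_sum]
  rw [Finset.sum_comm]
  refine Finset.sum_congr rfl fun t _ => ?_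
  refine Fintype.sum_equiv (Equiv.mulLeft t⁻¹) _ _ fun h => ?_
  simp [mul_assoc, mul_inv_rev]

theorem starC_starC (f : G → ℂ) : starC (starC f) = f := by
  funext g; simp [starC]

theorem starC_smul (c : ℂ) (f : G → ℂ) : starC (c • f) = conj c • starC f := by
  funext g; simp [starC]

theorem starC_convC (a b : G → ℂ) : starC (convC a b) = convC (starC b) (starC a) := by
  funext g
  simp only [starC, convC, map_sum, map_mul]
  refine Fintype.sum_equiv (Equiv.mulLeft g) _ _ fun h => ?_
  simp [mul_inv_rev, mul_comm, mul_assoc]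

theorem starC_psi (hu : IsUnitaryRep θ) (v : V) : starC (psi K θ v) = psi K θ v := by
  funext g
  by_cases hg : g ∈ K
  · have hg' : g⁻¹ ∈ K := inv_mem hg
    simp only [starC, psi, dif_pos hg, dif_pos hg', map_mul]
    congr 1
    · simp [map_div₀]
    · have h1 : (⟨g⁻¹, hg'⟩ : K) = (⟨g, hg⟩ : K)⁻¹ := rfl
      rw [h1, inner_conj_symm]
      set k : K := ⟨g, hg⟩
      have h2 : θ k (θ k⁻¹ v) = v := by
        have h3 : θ k * θ k⁻¹ = 1 := by rw [← map_mul, mul_inv_cancel, map_one]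
        calc θ k (θ k⁻¹ v) = (θ k * θ k⁻¹) v := rfl
          _ = v := by rw [h3]; rfl
      calc (inner ℂ v (θ k⁻¹ v) : ℂ) = inner ℂ (θ k v) (θ k (θ k⁻¹ v)) := (hu k v (θ k⁻¹ v)).symm
        _ = inner ℂ (θ k v) v := by rw [h2]
  · have hg' : g⁻¹ ∉ K := fun h => hg (by simpa using inv_mem h)
    simp [starC, psi, dif_neg hg, dif_neg hg']

theorem starC_mem_HSet (hu : IsUnitaryRep θ) (v : V) {f : G → ℂ} (hf : f ∈ HSet K θ v) :
    starC f ∈ HSet K θ v := by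
  have hψ := starC_psi K θ hu v
  have hf' : convC (convC (psi K θ v) f) (psi K θ v) = f := hf
  show convC (convC (psi K θ v) (starC f)) (psi K θ v) = starC f
  conv_rhs => rw [← hf']
  rw [starC_convC, starC_convC, hψ, convC_assoc]

theorem sph_star (hu : IsUnitaryRep θ) (v : V) {φ : G → ℂ}
    (hφ : IsSpherical K θ v φ) : starC φ = φ := by
  obtain ⟨hφH, hφ1, hφe⟩ := hφ
  obtain ⟨c, hc⟩ := hφe (starC φ) (starC_mem_HSet K θ hu v hφH)
  set r : ℝ := ∑ h : G, Complex.normSq (φ h) with hr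
  have hc1 : convC φ (starC φ) 1 = c := by
    rw [hc]; simp [hφ1]
  have hcr : c = (r : ℂ) := by
    rw [← hc1]
    simp only [convC, starC, mul_one, inv_inv, Complex.mul_conj, hr]
    push_cast
    rfl
  have h1r : (1 : ℝ) ≤ r := by
    have h := Finset.single_le_sum (f := fun h : G => Complex.normSq (φ h))
      (fun i _ => Complex.normSq_nonneg _) (Finset.mem_univ 1)
    simpa [hφ1] using h
  have hc0 : c ≠ 0 := by
    rw [hcr]
    exact_mod_cast ne_of_gt (lt_of_lt_of_le one_pos h1r)
  have key : c • starC φ = c • φ := by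
    calc c • starC φ = conj c • starC φ := by rw [hcr, Complex.conj_ofReal]
      _ = starC (c • φ) := (starC_smul c φ).symm
      _ = starC (convC φ (starC φ)) := by rw [hc]
      _ = convC (starC (starC φ)) (starC φ) := starC_convC _ _
      _ = convC φ (starC φ) := by rw [starC_starC]
      _ = c • φ := hc
  exact smul_right_injective (G → ℂ) hc0 key

/-- Let `(G,K,θ)` be a multiplicity-free triple and `φ ≠ μ` two distinct
spherical functions.  Then (i) `φ* = φ`; (ii) `φ * μ = 0`; (iii) all `G`-translates of `φ`
are orthogonal to all `G`-translates of `μ`; in particular `⟨φ, μ⟩_{L(G)} = 0`. -/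
theorem statement8 (K : Subgroup G) (θ : ↥K →* (V ≃ₗ[ℂ] V))
    (hu : IsUnitaryRep θ) (hirr : IsIrreducibleRep θ) (v : V) (hv : ‖v‖ = 1)
    (hmf : IsMultFree K θ) (φ μ : G → ℂ)
    (hφ : IsSpherical K θ v φ) (hμ : IsSpherical K θ v μ) (hne : φ ≠ μ) :
    (∀ g : G, conj (φ g⁻¹) = φ g) ∧
    convC φ μ = 0 ∧
    (∀ g₁ g₂ : G, innerC (translate g₁ φ) (translate g₂ μ) = 0) ∧
    innerC φ μ = 0 := by
  have hφs : starC φ = φ := sph_star K θ hu v hφ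
  have hμs : starC μ = μ := sph_star K θ hu v hμ
  -- (ii)
  obtain ⟨c, hc⟩ := hφ.2.2 μ hμ.1
  obtain ⟨c₂, hc₂⟩ := hμ.2.2 φ hφ.1
  have hμφ : convC μ φ = conj c • φ := by
    calc convC μ φ = convC (starC μ) (starC φ) := by rw [hφs, hμs]
      _ = starC (convC φ μ) := (starC_convC φ μ).symm
      _ = starC (c • φ) := by rw [hc]
      _ = conj c • starC φ := starC_smul c φ
      _ = conj c • φ := by rw [hφs]
  have heq : conj c • φ = c₂ • μ := by rw [← hμφ, hc₂]
  have hcc₂ : conj c = c₂ := by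
    have h1 := congrFun heq 1
    simpa [hφ.2.1, hμ.2.1] using h1
  have hcz : conj c = 0 := by
    by_contra h
    exact hne (smul_right_injective (G → ℂ) h
      (show conj c • φ = conj c • μ by rw [heq, hcc₂]))
  have hc0 : c = 0 := by
    have := congrArg conj hcz
    simpa using this
  have hii : convC φ μ = 0 := by rw [hc, hc0, zero_smul]
  have hμconj : ∀ x : G, conj (μ x) = μ x⁻¹ := by
    intro x
    conv_rhs => rw [← hμs]
    simp [starC]
  have hiii : ∀ g₁ g₂ : G, innerC (translate g₁ φ) (translate g₂ μ) = 0 := by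
    intro g₁ g₂
    have h : innerC (translate g₁ φ) (translate g₂ μ) = convC φ μ (g₁⁻¹ * g₂) := by
      simp only [innerC, translate, convC]
      refine Fintype.sum_equiv (Equiv.mulLeft g₁).symm _ _ fun g => ?_
      rw [hμconj]
      simp [mul_assoc, mul_inv_rev]
    rw [h, hii]
    rfl
  refine ⟨fun g => congrFun hφs g, hii, hiii, ?_⟩
  have h1 : translate (1 : G) φ = φ := by funext g; simp [translate]
  have h2 : translate (1 : G) μ = μ := by funext g; simp [translate]
  rw [← h1, ← h2]
  exact hiii 1 1

end MFT
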